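/- Let l ≥ 1 be an integer and 0 < λ < 1, and write h = −log λ. Then the improper integral I_l(λ) = ∫_1^∞ x^l λ^x/(1−λ^x) dx converges and equals Σ_{i=0}^{l} C(l,i) · (i!/h^{i+1}) · Li_{i+1}(λ), where Li_k(λ) = Σ_{n≥1} λ^n/n^k is the k-th polylogarithm. -/

import Mathlib

open MeasureTheory
open Set Real

lemma integrableOn_pow_mul_exp {a : ℝ} (ha : 0 < a) (i : ℕ) :
    IntegrableOn (fun t : ℝ => t ^ i * Real.exp (-(a * t))) (Set.Ioi 0) := by
  have h := integrableOn_rpow_mul_exp_neg_mul_rpow (s := (i:ℝ)) (p := 1)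
    (lt_of_lt_of_le (by norm_num) (Nat.cast_nonneg i)) zero_lt_one ha
  refine h.congr_fun (fun t ht => ?_) measurableSet_Ioi
  beta_reduce
  rw [Real.rpow_one, Real.rpow_natCast, neg_mul]

lemma integral_pow_mul_exp {a : ℝ} (ha : 0 < a) (i : ℕ) :
    ∫ t in Set.Ioi (0:ℝ), t ^ i * Real.exp (-(a * t)) = (i.factorial : ℝ) / a ^ (i+1) := by
  have h := Real.integral_rpow_mul_exp_neg_mul_Ioi (a := (i:ℝ)+1) (r := a) (by positivity) ha
  rw [show ((i:ℝ)+1) - 1 = (i:ℝ) by ring] at h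
  rw [setIntegral_congr_fun measurableSet_Ioi
    (fun t (ht : t ∈ Set.Ioi (0:ℝ)) => by rw [← Real.rpow_natCast t i]), h,
    Real.Gamma_nat_eq_factorial,
    show ((i:ℝ)+1) = ((i+1 : ℕ) : ℝ) by push_cast; ring, Real.rpow_natCast]
  rw [div_pow, one_pow, div_mul_eq_mul_div, one_mul]

lemma integral_Ioi_one_shift (f : ℝ → ℝ) :
    ∫ x in Set.Ioi (1:ℝ), f x = ∫ x in Set.Ioi (0:ℝ), f (x+1) := by
  have e : MeasurableEmbedding (fun x : ℝ => x + 1) :=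
    (MeasurableEquiv.addRight (1:ℝ)).measurableEmbedding
  have hmap : Measure.map (fun x : ℝ => x + 1) volume = volume :=
    map_add_right_eq_self volume 1
  have hpre : (fun x : ℝ => x + 1) ⁻¹' Set.Ioi 1 = Set.Ioi 0 := by ext x; simp
  conv_lhs => rw [← hmap]
  rw [e.setIntegral_map, hpre]

lemma integral_pow_mul_exp_Ioi_one {a : ℝ} (ha : 0 < a) (l : ℕ) :
    ∫ x in Set.Ioi (1:ℝ), x ^ l * Real.exp (-(a*x))
      = ∑ i ∈ Finset.range (l+1),
          (l.choose i : ℝ) * (i.factorial : ℝ) / a^(i+1) * Real.exp (-a) := by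
  rw [integral_Ioi_one_shift]
  have expand : ∀ x : ℝ, (x+1)^l * Real.exp (-(a*(x+1)))
      = ∑ i ∈ Finset.range (l+1),
          (l.choose i : ℝ) * Real.exp (-a) * (x^i * Real.exp (-(a*x))) := by
    intro x
    rw [add_pow, Finset.sum_mul]
    refine Finset.sum_congr rfl fun i _ => ?_
    rw [show -(a*(x+1)) = -(a*x) + -a by ring, Real.exp_add]
    ring
  rw [setIntegral_congr_fun measurableSet_Ioi (fun x _ => expand x),
    integral_finset_sum _ (fun i _ =>
      ((integrableOn_pow_mul_exp ha i).const_mul _))]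
  refine Finset.sum_congr rfl fun i _ => ?_
  rw [integral_const_mul, integral_pow_mul_exp ha i]
  ring



/-- For `l ≥ 1` and `0 < λ < 1`, the integral `I_l(λ) = ∫_1^∞ x^l λ^x/(1−λ^x) dx`
converges and equals `Σ_{i=0}^{l} C(l,i)·(i!/h^{i+1})·Li_{i+1}(λ)`, with `h = −log λ`. -/
theorem stmt5 (l : ℕ) (hl : 1 ≤ l) (lam : ℝ) (h0 : 0 < lam) (h1 : lam < 1) :
    IntegrableOn (fun x : ℝ => x ^ l * lam ^ x / (1 - lam ^ x)) (Set.Ioi 1) ∧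
    ∫ x in Set.Ioi (1 : ℝ), x ^ l * lam ^ x / (1 - lam ^ x)
      = ∑ i ∈ Finset.range (l + 1),
          (Nat.choose l i : ℝ) * (Nat.factorial i : ℝ) / (-Real.log lam) ^ (i + 1) *
            ∑' n : ℕ, lam ^ (n + 1) / ((n : ℝ) + 1) ^ (i + 1) := by
  set h := -Real.log lam with hhdef
  have hh : 0 < h := by have := Real.log_neg h0 h1; simp only [hhdef]; linarith
  have lamx : ∀ x : ℝ, lam ^ x = Real.exp (-(h * x)) := fun x => by
    rw [Real.rpow_def_of_pos h0]; congr 1; rw [hhdef]; ring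
  set F : ℕ → ℝ → ℝ := fun n x => x ^ l * Real.exp (-((((n : ℝ) + 1) * h) * x)) with hF
  have hnpos : ∀ n : ℕ, 0 < ((n : ℝ) + 1) * h := fun n => by positivity
  have hexp : ∀ n : ℕ, Real.exp (-(((n : ℝ) + 1) * h)) = lam ^ (n + 1) := fun n => by
    rw [← Real.rpow_natCast lam (n + 1), lamx]; congr 1; push_cast; ring
  -- pointwise series expansion
  have hpt : ∀ x ∈ Set.Ioi (1 : ℝ),
      x ^ l * lam ^ x / (1 - lam ^ x) = ∑' n, F n x := by
    intro x hx
    have hx0 : (0 : ℝ) < x := lt_trans zero_lt_one hx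
    have hl0 : 0 < lam ^ x := Real.rpow_pos_of_pos h0 x
    have hl1 : lam ^ x < 1 := Real.rpow_lt_one h0.le h1 hx0
    have hFx : ∀ n : ℕ, F n x = x ^ l * lam ^ x * (lam ^ x) ^ n := by
      intro n
      have e1 : Real.exp (-((((n : ℝ) + 1) * h) * x)) = Real.exp (-(h * x)) ^ (n + 1) := by
        rw [← Real.exp_nat_mul]; congr 1; push_cast; ring
      simp only [hF, e1, ← lamx, pow_succ]; ring
    rw [tsum_congr hFx, tsum_mul_left, tsum_geometric_of_lt_one hl0.le hl1, div_eq_mul_inv]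
  -- integrability and values of each term
  have hFint : ∀ n : ℕ, IntegrableOn (F n) (Set.Ioi 1) := fun n =>
    (integrableOn_pow_mul_exp (hnpos n) l).mono_set (Set.Ioi_subset_Ioi zero_le_one)
  have hFval : ∀ n : ℕ, ∫ x in Set.Ioi (1 : ℝ), F n x
      = ∑ i ∈ Finset.range (l + 1),
          (l.choose i : ℝ) * (i.factorial : ℝ) / (((n : ℝ) + 1) * h) ^ (i + 1)
            * lam ^ (n + 1) := by
    intro n
    rw [show (∫ x in Set.Ioi (1 : ℝ), F n x)
        = ∫ x in Set.Ioi (1 : ℝ), x ^ l * Real.exp (-((((n : ℝ) + 1) * h) * x)) from rfl,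
      integral_pow_mul_exp_Ioi_one (hnpos n) l]
    exact Finset.sum_congr rfl fun i _ => by rw [hexp n]
  have hFnorm : ∀ n : ℕ, ∫ x in Set.Ioi (1 : ℝ), ‖F n x‖ = ∫ x in Set.Ioi (1 : ℝ), F n x := by
    intro n
    refine setIntegral_congr_fun measurableSet_Ioi fun x hx => ?_
    have hx0 : (0 : ℝ) < x := lt_trans zero_lt_one hx
    exact Real.norm_of_nonneg (by positivity)
  -- geometric summability
  have hgeo : Summable (fun n : ℕ => lam ^ (n + 1)) :=
    ((summable_geometric_of_lt_one h0.le h1).mul_right lam).congr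
      fun n => (pow_succ lam n).symm
  set K := ∑ i ∈ Finset.range (l + 1), (l.choose i : ℝ) * (i.factorial : ℝ) / h ^ (i + 1)
    with hK
  have hbound : ∀ n : ℕ, ∫ x in Set.Ioi (1 : ℝ), F n x ≤ K * lam ^ (n + 1) := by
    intro n
    rw [hFval n, ← Finset.sum_mul]
    refine mul_le_mul_of_nonneg_right ?_ (by positivity)
    refine Finset.sum_le_sum fun i _ => ?_
    have h1n : h ≤ ((n : ℝ) + 1) * h :=
      le_mul_of_one_le_left hh.le (by push_cast; linarith [Nat.cast_nonneg (α := ℝ) n])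
    gcongr
  have hsum : Summable (fun n : ℕ => ∫ x in Set.Ioi (1 : ℝ), ‖F n x‖) := by
    refine Summable.of_nonneg_of_le
      (fun n => integral_nonneg fun x => norm_nonneg _)
      (fun n => by rw [hFnorm n]; exact hbound n) (hgeo.mul_left K)
  -- integrability of the full function
  have hcont : Continuous fun x : ℝ => lam ^ x := by
    have : (fun x : ℝ => lam ^ x) = fun x => Real.exp (Real.log lam * x) :=
      funext fun x => Real.rpow_def_of_pos h0 x
    rw [this]; exact Real.continuous_exp.comp (continuous_const.mul continuous_id)
  have hInt : IntegrableOn (fun x : ℝ => x ^ l * lam ^ x / (1 - lam ^ x)) (Set.Ioi 1) := by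
    have hmeas : AEStronglyMeasurable (fun x : ℝ => x ^ l * lam ^ x / (1 - lam ^ x))
        (volume.restrict (Set.Ioi 1)) := by
      refine ContinuousOn.aestronglyMeasurable ?_ measurableSet_Ioi
      refine ContinuousOn.div ((continuous_pow l).mul hcont).continuousOn
        (continuous_const.sub hcont).continuousOn fun x hx => ?_
      have : lam ^ x < 1 := Real.rpow_lt_one h0.le h1 (lt_trans zero_lt_one hx)
      linarith
    have hg : IntegrableOn
        (fun x : ℝ => (1 - lam)⁻¹ * (x ^ l * Real.exp (-(h * x)))) (Set.Ioi 1) :=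
      ((integrableOn_pow_mul_exp hh l).mono_set (Set.Ioi_subset_Ioi zero_le_one)).const_mul _
    refine Integrable.mono' hg hmeas ?_
    filter_upwards [ae_restrict_mem measurableSet_Ioi] with x hx
    have hx0 : (0 : ℝ) < x := lt_trans zero_lt_one hx
    have hl0 : 0 < lam ^ x := Real.rpow_pos_of_pos h0 x
    have hl1 : lam ^ x < 1 := Real.rpow_lt_one h0.le h1 hx0
    have h2 : lam ^ x ≤ lam := by
      have := Real.rpow_le_rpow_of_exponent_ge h0 h1.le hx.le
      rwa [Real.rpow_one] at this
    have h3 : (0 : ℝ) < 1 - lam := by linarith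
    calc ‖x ^ l * lam ^ x / (1 - lam ^ x)‖
        = x ^ l * lam ^ x / (1 - lam ^ x) := Real.norm_of_nonneg (div_nonneg (by positivity) (by linarith))
      _ ≤ x ^ l * lam ^ x / (1 - lam) := by
            gcongr <;> linarith
      _ = (1 - lam)⁻¹ * (x ^ l * Real.exp (-(h * x))) := by rw [lamx]; ring
  refine ⟨hInt, ?_⟩
  rw [setIntegral_congr_fun measurableSet_Ioi hpt,
    ← integral_tsum_of_summable_integral_norm (fun n => hFint n) hsum]
  -- evaluate the sum of integrals
  have hsum_i : ∀ i : ℕ, Summable (fun n : ℕ => lam ^ (n + 1) / ((n : ℝ) + 1) ^ (i + 1)) := by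
    intro i
    refine Summable.of_nonneg_of_le (fun n => by positivity)
      (fun n => div_le_self (by positivity)
        (one_le_pow₀ (by linarith [Nat.cast_nonneg (α := ℝ) n]))) hgeo
  have hval2 : ∀ n : ℕ, ∫ x in Set.Ioi (1 : ℝ), F n x
      = ∑ i ∈ Finset.range (l + 1),
          (l.choose i : ℝ) * (i.factorial : ℝ) / h ^ (i + 1)
            * (lam ^ (n + 1) / ((n : ℝ) + 1) ^ (i + 1)) := by
    intro n
    rw [hFval n]
    refine Finset.sum_congr rfl fun i _ => ?_
    rw [mul_pow, div_mul_eq_mul_div, div_mul_div_comm,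
      mul_comm (((n : ℝ) + 1) ^ (i + 1)) (h ^ (i + 1))]
  rw [tsum_congr hval2,
    Summable.tsum_finsetSum (fun i _ => (hsum_i i).mul_left _)]
  exact Finset.sum_congr rfl fun i _ => tsum_mul_left
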